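/- For α ∈ (0,1], λ > 0, t > 0, and k ≥ 0, the k-th coefficient in the power series expansion in u of exp(-λ^α t (1-u)^α) equals ((-1)^k/k!) ∑_{r=0}^∞ ((-λ^α t)^r / r!) · Γ(αr+1)/Γ(αr+1-k). -/

import Mathlib

open Real Finset

lemma one_sub_slit {z : ℂ} (hz : ‖z‖ < 1) : 1 - z ∈ Complex.slitPlane := by
  apply Complex.mem_slitPlane_iff.mpr
  left
  have : z.re < 1 := lt_of_le_of_lt (le_abs_self _) (lt_of_le_of_lt (Complex.abs_re_le_norm z) hz)
  simp only [Complex.sub_re, Complex.one_re]; linarith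

lemma cpow_hasDerivAt (c : ℂ) {z : ℂ} (hz : ‖z‖ < 1) :
    HasDerivAt (fun w : ℂ => (1 - w) ^ c) (c * (1 - z) ^ (c - 1) * (0 - 1)) z :=
  (((hasDerivAt_const z (1:ℂ)).sub (hasDerivAt_id z))).cpow_const (one_sub_slit hz)

lemma cpow_diff_on (s : ℝ) :
    DifferentiableOn ℂ (fun z : ℂ => (1 - z) ^ (s:ℂ)) (Metric.ball 0 1) := by
  intro z hz
  have hz1 : ‖z‖ < 1 := by simpa using hz
  exact (cpow_hasDerivAt (s:ℂ) hz1).differentiableAt.differentiableWithinAt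

lemma cpow_iteratedDeriv (s : ℝ) (n : ℕ) :
    ∀ z : ℂ, ‖z‖ < 1 → iteratedDeriv n (fun z : ℂ => (1 - z) ^ (s:ℂ)) z
      = (-1)^n * (∏ i ∈ range n, ((s:ℂ) - i)) * (1 - z) ^ ((s:ℂ) - n) := by
  induction n with
  | zero => intro z hz; simp
  | succ n ih =>
    intro z hz
    rw [iteratedDeriv_succ]
    have hev : iteratedDeriv n (fun z : ℂ => (1 - z) ^ (s:ℂ))
        =ᶠ[nhds z] fun w => (-1)^n * (∏ i ∈ range n, ((s:ℂ) - i)) * (1 - w) ^ ((s:ℂ) - n) := by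
      filter_upwards [Metric.ball_mem_nhds z (by linarith : (0:ℝ) < 1 - ‖z‖)] with w hw
      apply ih
      have hwz : ‖w - z‖ < 1 - ‖z‖ := by rw [← dist_eq_norm]; exact hw
      calc ‖w‖ ≤ ‖z‖ + ‖w - z‖ := norm_le_norm_add_norm_sub' w z
        _ < 1 := by linarith
    rw [hev.deriv_eq]
    have hd := cpow_hasDerivAt ((s:ℂ) - n) hz
    rw [deriv_const_mul _ hd.differentiableAt, hd.deriv, prod_range_succ]
    have : (s:ℂ) - (n+1:ℕ) = (s:ℂ) - n - 1 := by push_cast; ring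
    rw [this]
    ring

lemma binomial_hasSum (s : ℝ) {u : ℝ} (hu : |u| < 1) :
    HasSum (fun k : ℕ => (-1)^k / (k.factorial : ℝ) * (∏ i ∈ range k, (s - i)) * u ^ k)
      ((1 - u) ^ s) := by
  have hu1 : ‖(u:ℂ)‖ < 1 := by simpa [Complex.norm_real] using hu
  have H := Complex.hasSum_taylorSeries_on_ball (cpow_diff_on s)
    (z := (u:ℂ)) (by simpa using hu1)
  have h1u : (0:ℝ) < 1 - u := by
    have := abs_lt.mp hu
    linarith [this.2]
  have key : ∀ k : ℕ, ((k.factorial : ℂ))⁻¹ • ((u:ℂ) - 0) ^ k •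
      iteratedDeriv k (fun z : ℂ => (1 - z) ^ (s:ℂ)) 0
      = (((-1)^k / (k.factorial : ℝ) * (∏ i ∈ range k, (s - i)) * u ^ k : ℝ) : ℂ) := by
    intro k
    rw [cpow_iteratedDeriv s k 0 (by simp)]
    have : (1 - (0:ℂ)) ^ ((s:ℂ) - k) = 1 := by rw [sub_zero, Complex.one_cpow]
    rw [this]
    push_cast
    simp only [smul_eq_mul]
    ring
  rw [funext key] at H
  have hval : ((1:ℂ) - u) ^ (s:ℂ) = (((1 - u) ^ s : ℝ) : ℂ) := by
    rw [← Complex.ofReal_one, ← Complex.ofReal_sub, Complex.ofReal_cpow h1u.le]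
  rw [hval] at H
  exact Complex.hasSum_ofReal.mp H
open Real Finset

lemma gamma_descend (s : ℝ) (k : ℕ) (h : ∀ i : ℕ, i < k → s ≠ i) :
    Real.Gamma (s + 1) = (∏ i ∈ range k, (s - i)) * Real.Gamma (s + 1 - k) := by
  induction k with
  | zero => simp
  | succ k ih =>
    have hk : ∀ i : ℕ, i < k → s ≠ i := fun i hi => h i (hi.trans (Nat.lt_succ_self k))
    rw [ih hk, prod_range_succ]
    have h1 : s + 1 - k = (s - k) + 1 := by ring
    have h2 : s - (k:ℝ) ≠ 0 := sub_ne_zero.mpr (h k (Nat.lt_succ_self k))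
    rw [h1, Real.Gamma_add_one h2]
    have h3 : s + 1 - ((k:ℕ)+1 : ℕ) = s - k := by push_cast; ring
    rw [h3]; ring

lemma gamma_ratio (s : ℝ) (hs : 0 ≤ s) (k : ℕ) :
    Real.Gamma (s + 1) / Real.Gamma (s + 1 - k) = ∏ i ∈ range k, (s - i) := by
  by_cases h : ∀ i : ℕ, i < k → s ≠ i
  · have hne : Real.Gamma (s + 1 - k) ≠ 0 := by
      rw [Ne, Real.Gamma_eq_zero_iff]
      rintro ⟨m, hm⟩
      have hs' : s = (k:ℝ) - 1 - m := by linarith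
      have hk1 : m + 1 ≤ k := by
        have : (m:ℝ) + 1 ≤ (k:ℝ) := by nlinarith
        exact_mod_cast this
      refine h (k - 1 - m) ?_ ?_
      · omega
      · have : ((k - 1 - m : ℕ) : ℝ) = (k:ℝ) - 1 - m := by
          have hk1' : 1 + m ≤ k := by omega
          rw [Nat.sub_sub, Nat.cast_sub hk1']
          push_cast; ring
        rw [this, hs']
    rw [gamma_descend s k h, mul_div_assoc, div_self hne, mul_one]
  · push_neg at h
    obtain ⟨i, hik, hsi⟩ := h
    have h0 : (∏ j ∈ range k, (s - j)) = 0 := by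
      apply Finset.prod_eq_zero (Finset.mem_range.mpr hik)
      rw [hsi, sub_self]
    rw [h0]
    have : Real.Gamma (s + 1 - k) = 0 := by
      rw [Real.Gamma_eq_zero_iff]
      refine ⟨k - 1 - i, ?_⟩
      have h1 : 1 + i ≤ k := by omega
      have : ((k - 1 - i : ℕ) : ℝ) = (k:ℝ) - 1 - i := by
        rw [Nat.sub_sub, Nat.cast_sub (by omega : 1 + i ≤ k)]
        push_cast; ring
      rw [this, hsi]; ring
    rw [this, div_zero]

lemma neg_prod_eq (s : ℝ) (k : ℕ) :
    (-1:ℝ)^k / (k.factorial : ℝ) * (∏ i ∈ range k, (-s - i)) = (∏ i ∈ range k, (s + i)) / k.factorial := by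
  have h : ∏ i ∈ range k, (-s - (i:ℝ)) = ∏ i ∈ range k, (-1) * (s + i) :=
    Finset.prod_congr rfl (fun i _ => by ring)
  rw [h, Finset.prod_mul_distrib, Finset.prod_const, Finset.card_range]
  have h2 : (-1:ℝ)^k * (-1)^k = 1 := by
    rw [← pow_add]; exact Even.neg_one_pow ⟨k, rfl⟩
  field_simp
  rw [sq, h2, one_mul]

lemma F_summable (x α : ℝ) (hα0 : 0 ≤ α) (hα1 : α ≤ 1) {u : ℝ} (hu : |u| < 1) :
    Summable (fun p : ℕ × ℕ => x ^ p.1 / (p.1.factorial : ℝ) *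
      ((-1)^p.2 / (p.2.factorial : ℝ) * (∏ i ∈ range p.2, (α * p.1 - i)) * u ^ p.2)) := by
  set v := |u| with hvdef
  have hv0 : 0 ≤ v := abs_nonneg u
  have hv1 : v < 1 := hu
  have h1v : 0 < 1 - v := by linarith
  rw [← summable_abs_iff]
  set F : ℕ × ℕ → ℝ := fun p => x ^ p.1 / (p.1.factorial : ℝ) *
      ((-1)^p.2 / (p.2.factorial : ℝ) * (∏ i ∈ range p.2, (α * p.1 - i)) * u ^ p.2) with hF
  -- the comparison series
  have hGsum : ∀ r : ℕ, HasSum (fun k : ℕ => |x| ^ r / (r.factorial : ℝ) *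
      ((∏ i ∈ range k, (α * r + i)) / k.factorial * v ^ k))
      (|x| ^ r / (r.factorial : ℝ) * (1 - v) ^ (-(α * r))) := by
    intro r
    have hb := (binomial_hasSum (-(α * r)) (u := v) (by rwa [abs_of_nonneg hv0]))
    have : (fun k : ℕ => (-1:ℝ)^k / (k.factorial : ℝ) * (∏ i ∈ range k, (-(α * r) - i)) * v ^ k)
        = fun k : ℕ => (∏ i ∈ range k, (α * r + i)) / k.factorial * v ^ k := by
      funext k; rw [neg_prod_eq (α * r) k]
    rw [this] at hb
    exact hb.mul_left _
  have hbound : ∀ p : ℕ × ℕ, |F p| ≤ |x| ^ p.1 / (p.1.factorial : ℝ) *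
      ((∏ i ∈ range p.2, (α * p.1 + i)) / p.2.factorial * v ^ p.2) := by
    rintro ⟨r, k⟩
    have h1 : |(∏ i ∈ range k, (α * r - i))| ≤ ∏ i ∈ range k, (α * r + i) := by
      rw [Finset.abs_prod]
      apply Finset.prod_le_prod (fun i _ => abs_nonneg _)
      intro i _
      calc |α * r - i| ≤ |α * r| + |(i:ℝ)| := abs_sub _ _
        _ = α * r + i := by
            rw [abs_of_nonneg (by positivity), abs_of_nonneg (by positivity)]
    have : |F (r, k)| = |x| ^ r / (r.factorial : ℝ) *
        (1 / (k.factorial : ℝ) * |(∏ i ∈ range k, (α * r - i))| * v ^ k) := by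
      simp only [hF, abs_mul, abs_div, abs_pow, abs_neg, abs_one, one_pow,
        Nat.abs_cast, hvdef]
    rw [this]
    show _ ≤ |x| ^ r / (r.factorial : ℝ) * ((∏ i ∈ range k, (α * r + i)) / k.factorial * v ^ k)
    apply mul_le_mul_of_nonneg_left _ (by positivity)
    have h5 : (1:ℝ) / k.factorial * |∏ i ∈ range k, (α * r - i)| * v ^ k
        = |∏ i ∈ range k, (α * r - i)| / k.factorial * v ^ k := by ring
    rw [h5]
    gcongr
  have hFk : ∀ r : ℕ, Summable fun k => |F (r, k)| := by
    intro r
    exact Summable.of_nonneg_of_le (fun k => abs_nonneg _) (fun k => hbound (r, k))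
      (hGsum r).summable
  apply (summable_prod_of_nonneg (fun p => abs_nonneg (F p))).mpr
  refine ⟨hFk, ?_⟩
  apply Summable.of_nonneg_of_le (fun r => tsum_nonneg (fun k => abs_nonneg _))
    (fun r => ?_) (Real.summable_pow_div_factorial (|x| * (1 - v)⁻¹))
  have h2 : ∑' k, |F (r, k)| ≤ |x| ^ r / (r.factorial : ℝ) * (1 - v) ^ (-(α * r)) := by
    rw [← (hGsum r).tsum_eq]
    exact Summable.tsum_le_tsum (fun k => hbound (r, k)) (hFk r) (hGsum r).summable
  refine h2.trans ?_
  have h3 : (1 - v) ^ (-(α * r)) ≤ (1 - v) ^ (-(r:ℝ)) := by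
    apply Real.rpow_le_rpow_of_exponent_ge h1v (by linarith)
    have : α * r ≤ r := by nlinarith [Nat.cast_nonneg (α := ℝ) r]
    linarith
  have h4 : (1 - v) ^ (-(r:ℝ)) = ((1 - v)⁻¹) ^ r := by
    rw [Real.rpow_neg h1v.le, Real.rpow_natCast, inv_pow]
  calc |x| ^ r / (r.factorial : ℝ) * (1 - v) ^ (-(α * r))
      ≤ |x| ^ r / (r.factorial : ℝ) * ((1 - v)⁻¹) ^ r := by
        rw [← h4]; exact mul_le_mul_of_nonneg_left h3 (by positivity)
    _ = (|x| * (1 - v)⁻¹) ^ r / r.factorial := by rw [mul_pow]; ring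

theorem space_fractional_poisson_coefficients (l α t : ℝ) (hl : 0 < l)
    (hα : α ∈ Set.Ioc (0:ℝ) 1) (ht : 0 < t) (u : ℝ) (hu : |u| < 1) :
    Real.exp (-l ^ α * t * (1 - u) ^ α) =
      ∑' k : ℕ, ((-1 : ℝ) ^ k / (k.factorial : ℝ) *
        ∑' r : ℕ, (-l ^ α * t) ^ r / (r.factorial : ℝ) *
          (Real.Gamma (α * r + 1) / Real.Gamma (α * r + 1 - k))) * u ^ k := by
  obtain ⟨hα0, hα1⟩ := hα
  set x : ℝ := -l ^ α * t with hx
  have h1u : (0:ℝ) < 1 - u := by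
    have := (abs_lt.mp hu).2; linarith
  set F : ℕ × ℕ → ℝ := fun p => x ^ p.1 / (p.1.factorial : ℝ) *
      ((-1)^p.2 / (p.2.factorial : ℝ) * (∏ i ∈ range p.2, (α * p.1 - i)) * u ^ p.2) with hF
  have hFsum : Summable F := F_summable x α hα0.le hα1 hu
  -- Step A: exp as a series
  have hA : Real.exp (x * (1 - u) ^ α) = ∑' r : ℕ, (x * (1 - u) ^ α) ^ r / r.factorial := by
    rw [Real.exp_eq_exp_ℝ]
    exact (NormedSpace.expSeries_div_hasSum_exp (x * (1 - u) ^ α)).tsum_eq.symm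
  -- Step B: each term expands via the binomial series
  have hB : ∀ r : ℕ, (x * (1 - u) ^ α) ^ r / r.factorial = ∑' k : ℕ, F (r, k) := by
    intro r
    have hb := (binomial_hasSum (α * r) hu).mul_left (x ^ r / r.factorial)
    have hval : x ^ r / (r.factorial : ℝ) * (1 - u) ^ (α * r)
        = (x * (1 - u) ^ α) ^ r / r.factorial := by
      rw [Real.rpow_mul h1u.le, Real.rpow_natCast, mul_pow]
      ring
    rw [← hval, ← hb.tsum_eq]
  -- Step C: swap the order of summation
  have hrow : ∀ r : ℕ, Summable fun k => F (r, k) :=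
    fun r => hFsum.comp_injective (fun a b hab => by simpa using hab : Function.Injective fun k => ((r, k) : ℕ × ℕ))
  have hcol : ∀ k : ℕ, Summable fun r => F (r, k) :=
    fun k => hFsum.comp_injective (fun a b hab => by simpa using hab : Function.Injective fun r => ((r, k) : ℕ × ℕ))
  have hswap : Summable (fun p : ℕ × ℕ => F (p.2, p.1)) :=
    (Equiv.prodComm ℕ ℕ).summable_iff.mpr hFsum
  have hC : ∑' r : ℕ, ∑' k : ℕ, F (r, k) = ∑' k : ℕ, ∑' r : ℕ, F (r, k) := by
    rw [← Summable.tsum_prod' hFsum hrow, ← Summable.tsum_prod' hswap hcol]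
    exact ((Equiv.prodComm ℕ ℕ).tsum_eq F).symm
  -- Step D: identify the inner sum with the Gamma quotient form
  have hD : ∀ k : ℕ, ∑' r : ℕ, F (r, k)
      = ((-1 : ℝ) ^ k / (k.factorial : ℝ) *
        ∑' r : ℕ, x ^ r / (r.factorial : ℝ) *
          (Real.Gamma (α * r + 1) / Real.Gamma (α * r + 1 - k))) * u ^ k := by
    intro k
    have hterm : ∀ r : ℕ, F (r, k) = (-1 : ℝ) ^ k / (k.factorial : ℝ) *
        (x ^ r / (r.factorial : ℝ) *
          (Real.Gamma (α * r + 1) / Real.Gamma (α * r + 1 - k))) * u ^ k := by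
      intro r
      have := gamma_ratio (α * r) (by positivity) k
      simp only [hF]
      rw [this]
      ring
    rw [tsum_congr hterm]
    rw [tsum_mul_right, tsum_mul_left]
  calc Real.exp (x * (1 - u) ^ α)
      = ∑' r : ℕ, (x * (1 - u) ^ α) ^ r / r.factorial := hA
    _ = ∑' r : ℕ, ∑' k : ℕ, F (r, k) := tsum_congr hB
    _ = ∑' k : ℕ, ∑' r : ℕ, F (r, k) := hC
    _ = _ := tsum_congr hD
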